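/- Let L be a finite-dimensional solvable Lie algebra, U a subalgebra, and let 0 < A₁ < … < A_n = L and 0 < B₁ < … < B_n = L be two chief series of L. Then there is a bijection between the chief factors of the two series such that corresponding factors have the same dimension and U-Frattini chief factors correspond to U-Frattini chief factors. -/

import Mathlib

open LieAlgebra

namespace Paper

variable {F : Type*} [Field F] {L : Type*} [LieRing L] [LieAlgebra F L]

/-- The interval `[U:L]` is complemented: every subalgebra containing `U`
has a complement over `U`. -/
def IsComplementedInterval (U : LieSubalgebra F L) : Prop :=
  ∀ S : LieSubalgebra F L, U ≤ S →
    ∃ T : LieSubalgebra F L, U ≤ T ∧ S ⊓ T = U ∧ S ⊔ T = ⊤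

/-- `Ω(U,L)`. -/
def Omega (U : LieSubalgebra F L) : Set (LieSubalgebra F L) :=
  {S | U ≤ S ∧ IsComplementedInterval S}

/-- `Ω(U,L)_min`, the inclusion-minimal elements. -/
def OmegaMin (U : LieSubalgebra F L) : Set (LieSubalgebra F L) :=
  {S | S ∈ Omega U ∧ ∀ T ∈ Omega U, T ≤ S → T = S}

/-- `φ(U,L)`, the intersection of all maximal subalgebras containing `U`. -/
def phi (U : LieSubalgebra F L) : LieSubalgebra F L :=
  sInf {M : LieSubalgebra F L | IsCoatom M ∧ U ≤ M}

/-- A subalgebra which is an ideal of `L`. -/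
def IsIdealSubalg (A : LieSubalgebra F L) : Prop :=
  ∀ x : L, ∀ a ∈ A, ⁅x, a⁆ ∈ A

/-- A minimal ideal of `L`. -/
def IsMinimalIdeal (A : LieSubalgebra F L) : Prop :=
  A ≠ ⊥ ∧ IsIdealSubalg A ∧
    ∀ B : LieSubalgebra F L, IsIdealSubalg B → B ≤ A → B = ⊥ ∨ B = A

/-- A chief series `0 = A 0 < A 1 < … < A n = L`. -/
def IsChiefSeries (A : ℕ → LieSubalgebra F L) (n : ℕ) : Prop :=
  A 0 = ⊥ ∧ A n = ⊤ ∧ (∀ i, IsIdealSubalg (A i)) ∧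
    ∀ i < n, A i < A (i + 1) ∧
      ∀ B : LieSubalgebra F L, IsIdealSubalg B → A i ≤ B → B ≤ A (i + 1) →
        B = A i ∨ B = A (i + 1)

/-- The chief factor `A/B` is `U`-Frattini. -/
def IsUFrattiniFactor (U B A : LieSubalgebra F L) : Prop :=
  A ≤ phi (U ⊔ B) ∨ U ⊔ B = ⊤

/-- `B` is a `U`-prefrattini subalgebra with respect to the series `A`. -/
def IsPrefrattiniWrt (U : LieSubalgebra F L) (A : ℕ → LieSubalgebra F L) (n : ℕ)
    (B : LieSubalgebra F L) : Prop :=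
  ∃ M : ℕ → LieSubalgebra F L,
    (∀ i < n, ¬ IsUFrattiniFactor U (A i) (A (i + 1)) →
      IsCoatom (M i) ∧ U ⊔ A i ≤ M i ∧ ¬ A (i + 1) ≤ M i) ∧
    B = ⨅ i ∈ {i | i < n ∧ ¬ IsUFrattiniFactor U (A i) (A (i + 1))}, M i

/-- `B` is a `U`-prefrattini subalgebra of `L` (with respect to some chief series). -/
def IsPrefrattini (U B : LieSubalgebra F L) : Prop :=
  ∃ (n : ℕ) (A : ℕ → LieSubalgebra F L), IsChiefSeries A n ∧ IsPrefrattiniWrt U A n B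

/-- The lower central series of an ideal `I` of `L` (computed inside `L`):
`idealLCS I k = I^{k+1}`. -/
def idealLCS (I : LieIdeal F L) : ℕ → LieIdeal F L
  | 0 => I
  | k + 1 => ⁅I, idealLCS I k⁆

/-- The nilpotent residual `L^∞`. -/
def nilpotentResidual (F : Type*) (L : Type*) [Field F] [LieRing L] [LieAlgebra F L] :
    LieIdeal F L :=
  ⨅ k, LieModule.lowerCentralSeries F L L k

/-- The exponential `exp (ad x)` truncated below `p` (all higher terms vanish when
`ad x` has nilpotency index at most `p`). -/
noncomputable def expAd (F : Type*) {L : Type*} [Field F] [LieRing L] [LieAlgebra F L]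
    (p : ℕ) (x : L) : L →ₗ[F] L :=
  ∑ r ∈ Finset.range p, (r.factorial : F)⁻¹ • ((LieAlgebra.ad F L x : Module.End F L) ^ r : Module.End F L)

/-- The quotient map `L → L ⧸ I` as a morphism of Lie algebras. -/
def quotLieHom (I : LieIdeal F L) : L →ₗ⁅F⁆ L ⧸ I :=
  { I.toSubmodule.mkQ with map_lie' := rfl }

end Paper

namespace Paper

variable {F : Type*} [Field F] {L : Type*} [LieRing L] [LieAlgebra F L]

/-- The dimension of the chief factor `A/B`. -/
noncomputable def factorDim (F : Type*) [Field F] {L : Type*} [LieRing L] [LieAlgebra F L]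
    (B A : LieSubalgebra F L) : ℕ :=
  Module.finrank F A - Module.finrank F B

end Paper



/- ======================  auxiliary development for stmt9  ====================== -/

open Module

namespace Paper

variable {F : Type*} [Field F] {L : Type*} [LieRing L] [LieAlgebra F L]

variable {F : Type*} [Field F] {L : Type*} [LieRing L] [LieAlgebra F L]

theorem le_phi_iff {A U : LieSubalgebra F L} :
    A ≤ phi U ↔ ∀ M : LieSubalgebra F L, IsCoatom M → U ≤ M → A ≤ M :=
  ⟨fun h M hM hU => h.trans (sInf_le ⟨hM, hU⟩), fun h => le_sInf (fun M hM => h M hM.1 hM.2)⟩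

theorem subalg_ext {A B : LieSubalgebra F L} (h : A.toSubmodule = B.toSubmodule) : A = B :=
  (LieSubalgebra.toSubmodule_inj A B).1 h

theorem sup_toSubmodule {M N : LieSubalgebra F L}
    (h : ∀ m ∈ M, ∀ n ∈ N, ⁅m, n⁆ ∈ M.toSubmodule ⊔ N.toSubmodule) :
    (M ⊔ N).toSubmodule = M.toSubmodule ⊔ N.toSubmodule := by
  have hclosed : ∀ x ∈ M.toSubmodule ⊔ N.toSubmodule, ∀ y ∈ M.toSubmodule ⊔ N.toSubmodule,
      ⁅x, y⁆ ∈ M.toSubmodule ⊔ N.toSubmodule := by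
    rintro x hx y hy
    rw [Submodule.mem_sup] at hx hy
    obtain ⟨m, hm, n, hn, rfl⟩ := hx
    obtain ⟨m', hm', n', hn', rfl⟩ := hy
    have h1 : ⁅m, m'⁆ ∈ M.toSubmodule ⊔ N.toSubmodule :=
      Submodule.mem_sup_left (M.lie_mem hm hm')
    have h2 : ⁅m, n'⁆ ∈ M.toSubmodule ⊔ N.toSubmodule := h m hm n' hn'
    have h3 : ⁅n, m'⁆ ∈ M.toSubmodule ⊔ N.toSubmodule := by
      have h3' : -⁅m', n⁆ ∈ M.toSubmodule ⊔ N.toSubmodule := neg_mem (h m' hm' n hn)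
      rw [← lie_skew]
      exact h3'
    have h4 : ⁅n, n'⁆ ∈ M.toSubmodule ⊔ N.toSubmodule :=
      Submodule.mem_sup_right (N.lie_mem hn hn')
    have heq : ⁅m + n, m' + n'⁆ = ⁅m,m'⁆ + ⁅m,n'⁆ + (⁅n,m'⁆ + ⁅n,n'⁆) := by
      simp only [lie_add, add_lie]; abel
    rw [heq]
    exact add_mem (add_mem h1 h2) (add_mem h3 h4)
  let S : LieSubalgebra F L := { M.toSubmodule ⊔ N.toSubmodule with
    lie_mem' := fun hx hy => hclosed _ hx _ hy }
  apply le_antisymm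
  · exact (sup_le (fun x hx => (Submodule.mem_sup_left hx : x ∈ S))
      (fun x hx => (Submodule.mem_sup_right hx : x ∈ S)) : M ⊔ N ≤ S)
  · exact sup_le (fun x hx => (le_sup_left : M ≤ M ⊔ N) hx)
      (fun x hx => (le_sup_right : N ≤ M ⊔ N) hx)

theorem sup_toSubmodule_of_ideal {M N : LieSubalgebra F L} (hN : IsIdealSubalg N) :
    (M ⊔ N).toSubmodule = M.toSubmodule ⊔ N.toSubmodule :=
  sup_toSubmodule (fun m _ n hn => Submodule.mem_sup_right (hN m n hn))

theorem mem_sup_of_ideal {M N : LieSubalgebra F L} (hN : IsIdealSubalg N) {x : L} :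
    x ∈ M ⊔ N ↔ ∃ m ∈ M, ∃ n ∈ N, m + n = x := by
  rw [← LieSubalgebra.mem_toSubmodule, sup_toSubmodule_of_ideal hN, Submodule.mem_sup]
  rfl

theorem ideal_sup {A B : LieSubalgebra F L} (hA : IsIdealSubalg A) (hB : IsIdealSubalg B) :
    IsIdealSubalg (A ⊔ B) := by
  intro x a ha
  obtain ⟨m, hm, n, hn, rfl⟩ := (mem_sup_of_ideal hB).1 ha
  rw [lie_add]
  exact add_mem ((le_sup_left : A ≤ A ⊔ B) (hA x m hm))
    ((le_sup_right : B ≤ A ⊔ B) (hB x n hn))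

theorem ideal_inf {A B : LieSubalgebra F L} (hA : IsIdealSubalg A) (hB : IsIdealSubalg B) :
    IsIdealSubalg (A ⊓ B) := fun x a ha => ⟨hA x a ha.1, hB x a ha.2⟩

theorem ideal_top : IsIdealSubalg (⊤ : LieSubalgebra F L) := fun _ _ _ => trivial

theorem inf_sup_modular {X N Z : LieSubalgebra F L} (hN : IsIdealSubalg N) (hXZ : X ≤ Z) :
    ((X ⊔ N) ⊓ Z).toSubmodule = X.toSubmodule ⊔ (N.toSubmodule ⊓ Z.toSubmodule) := by
  rw [LieSubalgebra.inf_toSubmodule, sup_toSubmodule_of_ideal hN]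
  exact sup_inf_assoc_of_le _ (by exact fun x hx => hXZ hx)

section FD
variable [FiniteDimensional F L]

theorem finrank_top_subalg : finrank F (⊤ : LieSubalgebra F L) = finrank F L := by
  have h : (⊤ : LieSubalgebra F L).toSubmodule = ⊤ := LieSubalgebra.top_toSubmodule
  rw [show finrank F (⊤ : LieSubalgebra F L)
      = finrank F ((⊤ : LieSubalgebra F L).toSubmodule) from rfl, h, finrank_top]

theorem finrank_lt_of_lt {S T : LieSubalgebra F L} (h : S < T) :
    finrank F S < finrank F T := by
  have h2 : S.toSubmodule < T.toSubmodule := by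
    rw [lt_iff_le_and_ne] at h ⊢
    exact ⟨fun x hx => h.1 hx, fun he => h.2 (subalg_ext he)⟩
  exact Submodule.finrank_lt_finrank_of_lt h2

theorem finrank_le_of_le {S T : LieSubalgebra F L} (h : S ≤ T) :
    finrank F S ≤ finrank F T :=
  Submodule.finrank_mono (fun x hx => h hx : S.toSubmodule ≤ T.toSubmodule)

theorem exists_coatom_above {S : LieSubalgebra F L} (h : S ≠ ⊤) :
    ∃ M : LieSubalgebra F L, IsCoatom M ∧ S ≤ M := by
  obtain ⟨d, hd⟩ : ∃ d, finrank F L - finrank F S ≤ d := ⟨_, le_refl _⟩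
  induction d generalizing S with
  | zero =>
    exfalso
    have hlt : S < ⊤ := lt_of_le_of_ne le_top h
    have h1 := finrank_lt_of_lt hlt
    rw [finrank_top_subalg] at h1
    omega
  | succ d ih =>
    by_cases hc : IsCoatom S
    · exact ⟨S, hc, le_refl S⟩
    · unfold IsCoatom at hc
      push_neg at hc
      obtain ⟨T, hST, hT⟩ := hc h
      obtain ⟨M, hM, hTM⟩ := ih hT (by
        have h1 := finrank_lt_of_lt hST
        omega)
      exact ⟨M, hM, le_of_lt hST |>.trans hTM⟩

end FD

def ChiefStep (X Y : LieSubalgebra F L) : Prop :=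
  IsIdealSubalg X ∧ IsIdealSubalg Y ∧ X < Y ∧
    ∀ B : LieSubalgebra F L, IsIdealSubalg B → X ≤ B → B ≤ Y → B = X ∨ B = Y

def toIdeal (A : LieSubalgebra F L) (hA : IsIdealSubalg A) : LieIdeal F L :=
  { A.toSubmodule with lie_mem := fun {x} {a} ha => hA x a ha }

theorem mem_toIdeal {A : LieSubalgebra F L} (hA : IsIdealSubalg A) {x : L} :
    x ∈ toIdeal A hA ↔ x ∈ A := Iff.rfl

theorem toIdeal_toSubmodule {A : LieSubalgebra F L} (hA : IsIdealSubalg A) :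
    LieSubmodule.toSubmodule (toIdeal A hA) = A.toSubmodule := rfl

theorem chief_abelian [IsSolvable L] {X Y : LieSubalgebra F L} (h : ChiefStep X Y) :
    ∀ a ∈ Y, ∀ b ∈ Y, ⁅a, b⁆ ∈ X := by
  obtain ⟨hX, hY, hlt, hchief⟩ := h
  set XI := toIdeal X hX with hXIdef
  set YI := toIdeal Y hY with hYIdef
  set J : LieIdeal F L := XI ⊔ ⁅YI, YI⁆ with hJ
  set Js : LieSubalgebra F L := LieIdeal.toLieSubalgebra F L J with hJs
  have hJmem : ∀ x : L, x ∈ Js ↔ x ∈ J := fun x => Iff.rfl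
  have hJideal : IsIdealSubalg Js := fun x a ha => J.lie_mem ((hJmem a).1 ha)
  have hXJ : X ≤ Js := fun x hx => (hJmem x).2 ((le_sup_left : XI ≤ J) hx)
  have hJle : J ≤ YI := sup_le (fun y hy => (le_of_lt hlt) hy) (LieSubmodule.lie_le_right YI YI)
  have hJY : Js ≤ Y := fun x hx => hJle ((hJmem x).1 hx)
  rcases hchief Js hJideal hXJ hJY with hc | hc
  · intro a ha b hb
    have hm : ⁅a, b⁆ ∈ J := (le_sup_right : ⁅YI,YI⁆ ≤ J) (LieSubmodule.lie_mem_lie ha hb)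
    rw [← hc]; exact (hJmem _).2 hm
  · exfalso
    have hYJ : YI = J := by
      apply LieSubmodule.toSubmodule_injective
      rw [toIdeal_toSubmodule, ← hc]
      rfl
    -- YI ≤ XI ⊔ derivedSeriesOfIdeal k YI for all k
    have hder : ∀ k, YI ≤ XI ⊔ derivedSeriesOfIdeal F L k YI := by
      intro k
      induction k with
      | zero => rw [derivedSeriesOfIdeal_zero]; exact le_sup_right
      | succ k ih =>
        have h1 : ⁅YI, YI⁆ ≤ ⁅XI ⊔ derivedSeriesOfIdeal F L k YI,
            XI ⊔ derivedSeriesOfIdeal F L k YI⁆ := LieSubmodule.mono_lie ih ih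
        have h2 : ⁅XI ⊔ derivedSeriesOfIdeal F L k YI, XI ⊔ derivedSeriesOfIdeal F L k YI⁆
            ≤ XI ⊔ derivedSeriesOfIdeal F L (k+1) YI := by
          rw [LieSubmodule.sup_lie]
          apply sup_le
          · exact (LieSubmodule.lie_le_left _ _).trans le_sup_left
          · rw [LieSubmodule.lie_sup]
            apply sup_le
            · exact (LieSubmodule.lie_le_right _ _).trans le_sup_left
            · rw [derivedSeriesOfIdeal_succ]; exact le_sup_right
        calc YI = XI ⊔ ⁅YI, YI⁆ := hYJ
        _ ≤ XI ⊔ (XI ⊔ derivedSeriesOfIdeal F L (k+1) YI) :=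
            sup_le le_sup_left ((h1.trans h2).trans le_sup_right)
        _ = XI ⊔ derivedSeriesOfIdeal F L (k+1) YI := by rw [← sup_assoc, sup_idem]
    obtain ⟨k, hk⟩ := IsSolvable.solvable F L
    have hle : YI ≤ XI := by
      have h1 := hder k
      have h2 : derivedSeriesOfIdeal F L k YI ≤ derivedSeries F L k :=
        derivedSeriesOfIdeal_mono le_top k
      rw [hk] at h2
      have h3 : derivedSeriesOfIdeal F L k YI = ⊥ := le_bot_iff.mp h2
      rw [h3, sup_bot_eq] at h1
      exact h1
    exact (not_le_of_gt hlt) (fun x hx => hle hx)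


def UF (U X Y : LieSubalgebra F L) : Prop := Y ≤ phi (U ⊔ X) ∨ U ⊔ X = ⊤

section Solv
variable [IsSolvable L] [FiniteDimensional F L]

theorem cover_avoid {M X Y : LieSubalgebra F L} (hM : IsCoatom M) (h : ChiefStep X Y)
    (hXM : X ≤ M) (hYM : ¬ Y ≤ M) : M ⊓ Y = X ∧ M ⊔ Y = ⊤ := by
  have hYid : IsIdealSubalg Y := h.2.1
  have hsup : M ⊔ Y = ⊤ := by
    apply hM.2
    refine lt_of_le_of_ne le_sup_left (fun he => hYM ?_)
    rw [he]; exact le_sup_right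
  have hXY : X ≤ Y := le_of_lt h.2.2.1
  have hideal : IsIdealSubalg (M ⊓ Y) := by
    intro x v hv
    have hx : x ∈ M ⊔ Y := by rw [hsup]; trivial
    obtain ⟨m, hm, n, hn, rfl⟩ := (mem_sup_of_ideal hYid).1 hx
    rw [add_lie]
    refine add_mem ⟨M.lie_mem hm hv.1, hYid m _ hv.2⟩ ?_
    have h1 : ⁅n, v⁆ ∈ X := chief_abelian h n hn v hv.2
    exact ⟨hXM h1, hXY h1⟩
  rcases h.2.2.2 (M ⊓ Y) hideal (le_inf hXM hXY) inf_le_right with hc | hc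
  · exact ⟨hc, hsup⟩
  · exact absurd (hc ▸ inf_le_left) hYM

theorem up_lemma {U K A1 B1 : LieSubalgebra F L} (hKB : K ≤ B1)
    (h : UF U K A1) : UF U B1 (A1 ⊔ B1) := by
  rcases h with h | h
  · left
    rw [le_phi_iff]
    intro M hM hUM
    have hUK : U ⊔ K ≤ M := sup_le (le_sup_left.trans hUM) (hKB.trans (le_sup_right.trans hUM))
    have hA1 : A1 ≤ M := (h.trans (sInf_le ⟨hM, hUK⟩))
    exact sup_le hA1 (le_sup_right.trans hUM)
  · right
    rw [eq_top_iff, ← h]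
    exact sup_le le_sup_left (hKB.trans le_sup_right)

theorem fr_sub (S : LieSubalgebra F L) : finrank F S.toSubmodule = finrank F S := rfl

theorem fr_inf (S T : LieSubalgebra F L) :
    finrank F ↥(S.toSubmodule ⊓ T.toSubmodule) = finrank F ↥(S ⊓ T) := by
  rw [← LieSubalgebra.inf_toSubmodule]
  rfl

theorem fr_eq {K S T : LieSubalgebra F L} (hT : IsIdealSubalg T) (hsup : S ⊔ T = ⊤)
    (hinf : S ⊓ T = K) :
    finrank F S + finrank F T = finrank F L + finrank F K := by
  have h1 := Submodule.finrank_sup_add_finrank_inf_eq S.toSubmodule T.toSubmodule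
  rw [← sup_toSubmodule_of_ideal hT, ← LieSubalgebra.inf_toSubmodule, hsup, hinf,
    fr_sub, fr_sub, fr_sub, fr_sub, finrank_top_subalg] at h1
  omega

theorem not_UF_iff {U K A1 : LieSubalgebra F L} :
    ¬ UF U K A1 ↔ (∃ M : LieSubalgebra F L, IsCoatom M ∧ U ⊔ K ≤ M ∧ ¬ A1 ≤ M) ∧ U ⊔ K ≠ ⊤ := by
  unfold UF
  rw [not_or]
  constructor
  · rintro ⟨h1, h2⟩
    refine ⟨?_, h2⟩
    rw [le_phi_iff] at h1
    push_neg at h1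
    obtain ⟨M, hM, hUM, hA⟩ := h1
    exact ⟨M, hM, hUM, hA⟩
  · rintro ⟨⟨M, hM, hUM, hA⟩, h2⟩
    refine ⟨fun hle => hA (hle.trans (sInf_le ⟨hM, hUM⟩)), h2⟩

theorem H1 {U K A1 B1 : LieSubalgebra F L}
    (hA : ChiefStep K A1) (hB : ChiefStep K B1) (hne : A1 ≠ B1)
    (ht2 : UF U B1 (A1 ⊔ B1)) (hs1 : ¬ UF U K A1) :
    finrank F A1 = finrank F B1 ∧ ¬ UF U K B1 ∧ UF U A1 (A1 ⊔ B1) := by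
  obtain ⟨⟨M, hM, hUKM, hA1M⟩, hUKtop⟩ := not_UF_iff.1 hs1
  have hKM : K ≤ M := le_sup_right.trans hUKM
  have hUM : U ≤ M := le_sup_left.trans hUKM
  obtain ⟨hMA1inf, hMA1sup⟩ := cover_avoid hM hA hKM hA1M
  -- B1 is not contained in M
  have hB1M : ¬ B1 ≤ M := by
    intro hle
    rcases ht2 with h | h
    · have hUB1M : U ⊔ B1 ≤ M := sup_le hUM hle
      have : A1 ⊔ B1 ≤ M := h.trans (sInf_le ⟨hM, hUB1M⟩)
      exact hA1M (le_sup_left.trans this)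
    · exact hM.1 (eq_top_iff.2 (h ▸ (sup_le hUM hle)))
  obtain ⟨hMB1inf, hMB1sup⟩ := cover_avoid hM hB hKM hB1M
  have hfrA := fr_eq hA.2.1 hMA1sup hMA1inf
  have hfrB := fr_eq hB.2.1 hMB1sup hMB1inf
  have hfr : finrank F A1 = finrank F B1 := by omega
  refine ⟨hfr, ?_, ?_⟩
  · rw [not_UF_iff]
    exact ⟨⟨M, hM, hUKM, hB1M⟩, hUKtop⟩
  · -- UF U A1 (A1 ⊔ B1)
    have hKA1 : K ≤ A1 := le_of_lt hA.2.2.1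
    have hKB1 : K ≤ B1 := le_of_lt hB.2.2.1
    rcases ht2 with hC | htop
    · -- C ≤ phi (U ⊔ B1); show A1 ⊔ B1 ≤ phi (U ⊔ A1)
      left
      rw [le_phi_iff]
      intro M' hM' hUA1M'
      have hUM' : U ≤ M' := le_sup_left.trans hUA1M'
      have hA1M' : A1 ≤ M' := le_sup_right.trans hUA1M'
      have hKM' : K ≤ M' := hKA1.trans hA1M'
      by_cases hB1M' : B1 ≤ M'
      · exact sup_le hA1M' hB1M'
      exfalso
      obtain ⟨hM'B1inf, hM'B1sup⟩ := cover_avoid hM' hB hKM' hB1M'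
      have hfrB' := fr_eq hB.2.1 hM'B1sup hM'B1inf
      -- N₀ := (M ⊓ M') ⊔ B1
      set N : LieSubalgebra F L := (M ⊓ M') ⊔ B1 with hN
      have hUN : U ≤ N := (le_inf hUM hUM').trans (le_sup_left : (M ⊓ M') ≤ N)
      have hNA1 : N ⊓ A1 ≤ K := by
        have h1 : N.toSubmodule ⊓ M'.toSubmodule
            = (M ⊓ M').toSubmodule ⊔ (B1.toSubmodule ⊓ M'.toSubmodule) := by
          rw [hN, sup_toSubmodule_of_ideal hB.2.1]
          exact sup_inf_assoc_of_le _
            (fun x hx => (inf_le_right : M ⊓ M' ≤ M') hx)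
        have h2 : B1.toSubmodule ⊓ M'.toSubmodule = K.toSubmodule := by
          rw [← LieSubalgebra.inf_toSubmodule, inf_comm, hM'B1inf]
        rw [h2] at h1
        have h3 : (M ⊓ M').toSubmodule ⊔ K.toSubmodule = (M ⊓ M').toSubmodule :=
          sup_eq_left.2 (fun x hx => ⟨hKM hx, hKM' hx⟩)
        rw [h3] at h1
        intro x hx
        have hxM' : x ∈ N.toSubmodule ⊓ M'.toSubmodule := ⟨hx.1, hA1M' hx.2⟩
        rw [h1] at hxM'
        have hxMA : x ∈ M ⊓ A1 := ⟨hxM'.1, hx.2⟩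
        rw [hMA1inf] at hxMA
        exact hxMA
      -- dimension count
      have hrMM' : finrank F ↥(M ⊓ M') + finrank F L
          ≥ finrank F ↥M + finrank F ↥M' := by
        have h1 := Submodule.finrank_sup_add_finrank_inf_eq M.toSubmodule M'.toSubmodule
        rw [fr_inf, fr_sub M, fr_sub M'] at h1
        have h2 : finrank F ↥(M.toSubmodule ⊔ M'.toSubmodule) ≤ finrank F L :=
          Submodule.finrank_le _
        omega
      have hrN : finrank F ↥N + finrank F ↥K ≥ finrank F ↥(M ⊓ M') + finrank F ↥B1 := by
        have h1 := Submodule.finrank_sup_add_finrank_inf_eq (M ⊓ M').toSubmodule B1.toSubmodule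
        rw [← sup_toSubmodule_of_ideal hB.2.1, ← hN, fr_sub N, fr_sub (M ⊓ M'), fr_sub B1] at h1
        have h2 : finrank F ↥((M ⊓ M').toSubmodule ⊓ B1.toSubmodule) ≤ finrank F ↥K := by
          apply Submodule.finrank_mono
          intro x hx
          have hxx : x ∈ M ⊓ B1 := ⟨(inf_le_left : M ⊓ M' ≤ M) hx.1, hx.2⟩
          rw [hMB1inf] at hxx
          exact hxx
        omega
      have hrNA : finrank F ↥(N.toSubmodule ⊔ A1.toSubmodule) + finrank F ↥K
          ≥ finrank F ↥N + finrank F ↥A1 := by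
        have h1 := Submodule.finrank_sup_add_finrank_inf_eq N.toSubmodule A1.toSubmodule
        rw [fr_sub N, fr_sub A1] at h1
        have h2 : finrank F ↥(N.toSubmodule ⊓ A1.toSubmodule) ≤ finrank F ↥K := by
          apply Submodule.finrank_mono
          intro x hx
          exact hNA1 ⟨hx.1, hx.2⟩
        omega
      have hNtop : N.toSubmodule ⊔ A1.toSubmodule = ⊤ := by
        apply Submodule.eq_top_of_finrank_eq
        have hle : finrank F ↥(N.toSubmodule ⊔ A1.toSubmodule) ≤ finrank F L :=
          Submodule.finrank_le _
        omega
      have hNneq : N ≠ ⊤ := by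
        intro he
        have : A1 ≤ K := by
          intro x hx
          exact hNA1 ⟨by rw [he]; trivial, hx⟩
        exact (not_le_of_gt hA.2.2.1) this
      obtain ⟨M'', hM'', hNM''⟩ := exists_coatom_above hNneq
      have hUB1M'' : U ⊔ B1 ≤ M'' := sup_le (hUN.trans hNM'') ((le_sup_right : B1 ≤ N).trans hNM'')
      have hCM'' : A1 ⊔ B1 ≤ M'' := hC.trans (sInf_le ⟨hM'', hUB1M''⟩)
      have hA1M'' : A1 ≤ M'' := le_sup_left.trans hCM''
      apply hM''.1
      apply subalg_ext
      rw [LieSubalgebra.top_toSubmodule, ← top_le_iff, ← hNtop]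
      exact sup_le (fun x hx => hNM'' hx) (fun x hx => hA1M'' hx)
    · -- U ⊔ B1 = ⊤ : show U ⊔ A1 = ⊤
      right
      -- M = U ⊔ K
      have hMeq : M = U ⊔ K := by
        apply subalg_ext
        have h0 : (U ⊔ K) ⊔ B1 = ⊤ := by
          rw [sup_assoc, sup_eq_right.2 hKB1]
          exact htop
        have h1 : (((U ⊔ K) ⊔ B1) ⊓ M).toSubmodule
            = (U ⊔ K).toSubmodule ⊔ (B1.toSubmodule ⊓ M.toSubmodule) :=
          inf_sup_modular hB.2.1 hUKM
        rw [h0] at h1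
        have h2 : B1.toSubmodule ⊓ M.toSubmodule = K.toSubmodule := by
          rw [← LieSubalgebra.inf_toSubmodule, inf_comm, hMB1inf]
        rw [h2] at h1
        have h3 : (U ⊔ K).toSubmodule ⊔ K.toSubmodule = (U ⊔ K).toSubmodule :=
          sup_eq_left.2 (fun x hx => (le_sup_right : K ≤ U ⊔ K) hx)
        rw [h3, top_inf_eq] at h1
        exact h1
      rw [eq_top_iff, ← hMA1sup, hMeq]
      exact sup_le (sup_le le_sup_left (hKA1.trans le_sup_right)) le_sup_right

noncomputable def fdata (U X Y : LieSubalgebra F L) : ℕ × Prop :=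
  (finrank F Y - finrank F X, UF U X Y)

theorem inf_eq_of_chief {K A1 B1 : LieSubalgebra F L}
    (hA : ChiefStep K A1) (hB : ChiefStep K B1) (hne : A1 ≠ B1) : A1 ⊓ B1 = K := by
  rcases hA.2.2.2 (A1 ⊓ B1) (ideal_inf hA.2.1 hB.2.1)
      (le_inf (le_of_lt hA.2.2.1) (le_of_lt hB.2.2.1)) inf_le_left with hc | hc
  · exact hc
  · exfalso
    have hAB : A1 ≤ B1 := hc ▸ inf_le_right
    rcases hB.2.2.2 A1 hA.2.1 (le_of_lt hA.2.2.1) hAB with h1 | h1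
    · exact (ne_of_gt hA.2.2.1) h1
    · exact hne h1

theorem chief_sup_left {K A1 B1 : LieSubalgebra F L}
    (hA : ChiefStep K A1) (hB : ChiefStep K B1) (hne : A1 ≠ B1) :
    ChiefStep A1 (A1 ⊔ B1) := by
  have hKA1 : K ≤ A1 := le_of_lt hA.2.2.1
  have hKB1 : K ≤ B1 := le_of_lt hB.2.2.1
  refine ⟨hA.2.1, ideal_sup hA.2.1 hB.2.1, ?_, ?_⟩
  · refine lt_of_le_of_ne le_sup_left (fun he => ?_)
    have hBA : B1 ≤ A1 := by rw [he]; exact le_sup_right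
    rcases hA.2.2.2 B1 hB.2.1 hKB1 hBA with h1 | h1
    · exact (ne_of_gt hB.2.2.1) h1
    · exact hne h1.symm
  · intro W hW hAW hWC
    have hKW : K ≤ W ⊓ B1 := le_inf (hKA1.trans hAW) hKB1
    rcases hB.2.2.2 (W ⊓ B1) (ideal_inf hW hB.2.1) hKW inf_le_right with hc | hc
    · left
      apply subalg_ext
      have hmod : (A1.toSubmodule ⊔ B1.toSubmodule) ⊓ W.toSubmodule
          = A1.toSubmodule ⊔ (B1.toSubmodule ⊓ W.toSubmodule) :=
        sup_inf_assoc_of_le _ (fun x hx => hAW hx)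
      have hWle : W.toSubmodule ≤ A1.toSubmodule ⊔ B1.toSubmodule := by
        rw [← sup_toSubmodule_of_ideal hB.2.1]
        exact fun x hx => hWC hx
      have hWeq : W.toSubmodule = A1.toSubmodule ⊔ (B1.toSubmodule ⊓ W.toSubmodule) := by
        rw [← hmod, inf_eq_right.2 hWle]
      have hbk : B1.toSubmodule ⊓ W.toSubmodule = K.toSubmodule := by
        rw [← LieSubalgebra.inf_toSubmodule, inf_comm B1 W, hc]
      rw [hWeq, hbk]
      exact sup_eq_left.2 (fun x hx => hKA1 hx)
    · right
      apply subalg_ext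
      apply le_antisymm (fun x hx => hWC hx)
      rw [sup_toSubmodule_of_ideal hB.2.1]
      apply sup_le (fun x hx => hAW hx)
      intro x hx
      have : x ∈ W ⊓ B1 := by rw [hc]; exact hx
      exact this.1

theorem diamond {U K A1 B1 : LieSubalgebra F L}
    (hA : ChiefStep K A1) (hB : ChiefStep K B1) (hne : A1 ≠ B1) :
    ({fdata U K A1, fdata U A1 (A1 ⊔ B1)} : Multiset (ℕ × Prop))
      = {fdata U K B1, fdata U B1 (A1 ⊔ B1)} := by
  have hKA1 : K ≤ A1 := le_of_lt hA.2.2.1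
  have hKB1 : K ≤ B1 := le_of_lt hB.2.2.1
  have hinf : A1 ⊓ B1 = K := inf_eq_of_chief hA hB hne
  have hsupc : A1 ⊔ B1 = B1 ⊔ A1 := sup_comm A1 B1
  -- dimension bookkeeping
  have hfr : finrank F A1 + finrank F B1 = finrank F ↥(A1 ⊔ B1) + finrank F K := by
    have h1 := Submodule.finrank_sup_add_finrank_inf_eq A1.toSubmodule B1.toSubmodule
    rw [← sup_toSubmodule_of_ideal hB.2.1, fr_inf, hinf, fr_sub A1, fr_sub B1,
      fr_sub (A1 ⊔ B1)] at h1
    omega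
  have hle1 : finrank F K ≤ finrank F A1 := finrank_le_of_le hKA1
  have hle2 : finrank F K ≤ finrank F B1 := finrank_le_of_le hKB1
  have hle3 : finrank F A1 ≤ finrank F ↥(A1 ⊔ B1) := finrank_le_of_le le_sup_left
  have hle4 : finrank F B1 ≤ finrank F ↥(A1 ⊔ B1) := finrank_le_of_le le_sup_right
  have hd1 : finrank F A1 - finrank F K = finrank F ↥(A1 ⊔ B1) - finrank F B1 := by omega
  have hd2 : finrank F ↥(A1 ⊔ B1) - finrank F A1 = finrank F B1 - finrank F K := by omega
  -- up lemmas
  have up1 : UF U K A1 → UF U B1 (A1 ⊔ B1) := up_lemma hKB1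
  have up2 : UF U K B1 → UF U A1 (A1 ⊔ B1) := fun h => hsupc ▸ up_lemma hKA1 h
  have H1' : UF U A1 (A1 ⊔ B1) → ¬ UF U K B1 →
      finrank F B1 = finrank F A1 ∧ ¬ UF U K A1 ∧ UF U B1 (A1 ⊔ B1) := by
    intro h1 h2
    have := H1 hB hA (Ne.symm hne) (hsupc ▸ h1) h2
    exact ⟨this.1, this.2.1, hsupc ▸ this.2.2⟩
  by_cases s1 : UF U K A1 <;> by_cases t1 : UF U K B1
  · -- crosswise
    have t2 := up1 s1
    have s2 := up2 t1
    have e1 : fdata U K A1 = fdata U B1 (A1 ⊔ B1) := by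
      unfold fdata
      exact Prod.ext hd1 (propext ⟨fun _ => t2, fun _ => s1⟩)
    have e2 : fdata U A1 (A1 ⊔ B1) = fdata U K B1 := by
      unfold fdata
      exact Prod.ext hd2 (propext ⟨fun _ => t1, fun _ => s2⟩)
    rw [e1, e2]
    exact Multiset.cons_swap _ _ _
  · have t2 := up1 s1
    have hns2 : ¬ UF U A1 (A1 ⊔ B1) := fun s2 => (H1' s2 t1).2.1 s1
    have e1 : fdata U K A1 = fdata U B1 (A1 ⊔ B1) := by
      unfold fdata
      exact Prod.ext hd1 (propext ⟨fun _ => t2, fun _ => s1⟩)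
    have e2 : fdata U A1 (A1 ⊔ B1) = fdata U K B1 := by
      unfold fdata
      exact Prod.ext hd2 (propext ⟨fun h => absurd h hns2, fun h => absurd h t1⟩)
    rw [e1, e2]
    exact Multiset.cons_swap _ _ _
  · have s2 := up2 t1
    have hnt2 : ¬ UF U B1 (A1 ⊔ B1) := fun t2 => (H1 hA hB hne t2 s1).2.1 t1
    have e1 : fdata U K A1 = fdata U B1 (A1 ⊔ B1) := by
      unfold fdata
      exact Prod.ext hd1 (propext ⟨fun h => absurd h s1, fun h => absurd h hnt2⟩)
    have e2 : fdata U A1 (A1 ⊔ B1) = fdata U K B1 := by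
      unfold fdata
      exact Prod.ext hd2 (propext ⟨fun _ => t1, fun _ => s2⟩)
    rw [e1, e2]
    exact Multiset.cons_swap _ _ _
  · by_cases t2 : UF U B1 (A1 ⊔ B1)
    · -- straight matching with equal dims
      obtain ⟨hfrab, hnt1, s2⟩ := H1 hA hB hne t2 s1
      have e1 : fdata U K A1 = fdata U K B1 := by
        unfold fdata
        exact Prod.ext (by omega) (propext ⟨fun h => absurd h s1, fun h => absurd h t1⟩)
      have e2 : fdata U A1 (A1 ⊔ B1) = fdata U B1 (A1 ⊔ B1) := by
        unfold fdata
        exact Prod.ext (by omega) (propext ⟨fun _ => t2, fun _ => s2⟩)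
      rw [e1, e2]
    · have hns2' : ¬ UF U A1 (A1 ⊔ B1) := fun s2 => t2 ((H1' s2 t1).2.2)
      have e1 : fdata U K A1 = fdata U B1 (A1 ⊔ B1) := by
        unfold fdata
        exact Prod.ext hd1 (propext ⟨fun h => absurd h s1, fun h => absurd h t2⟩)
      have e2 : fdata U A1 (A1 ⊔ B1) = fdata U K B1 := by
        unfold fdata
        exact Prod.ext hd2 (propext ⟨fun h => absurd h hns2', fun h => absurd h t1⟩)
      rw [e1, e2]
      exact Multiset.cons_swap _ _ _

def ChainFrom : LieSubalgebra F L → List (LieSubalgebra F L) → Prop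
  | K, [] => K = ⊤
  | K, X :: r => ChiefStep K X ∧ ChainFrom X r

noncomputable def chainData (U : LieSubalgebra F L) : List (LieSubalgebra F L) → LieSubalgebra F L → Multiset (ℕ × Prop)
  | [], _ => 0
  | X :: r, K => fdata U K X ::ₘ chainData U r X

/-- existence of a minimal ideal over K below D -/
theorem exists_chief_above {K D : LieSubalgebra F L}
    (hK : IsIdealSubalg K) (hD : IsIdealSubalg D) (hKD : K < D) :
    ∃ X, ChiefStep K X ∧ X ≤ D := by
  obtain ⟨e, he⟩ : ∃ e, finrank F D ≤ e := ⟨_, le_refl _⟩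
  induction e generalizing D with
  | zero =>
    refine ⟨D, ⟨hK, hD, hKD, fun B hB hKB hBD => ?_⟩, le_refl D⟩
    exfalso
    have h1 := finrank_lt_of_lt hKD
    omega
  | succ e ih =>
    by_cases hc : ∀ B : LieSubalgebra F L, IsIdealSubalg B → K ≤ B → B ≤ D → B = K ∨ B = D
    · exact ⟨D, ⟨hK, hD, hKD, hc⟩, le_refl D⟩
    · push_neg at hc
      obtain ⟨B, hB, hKB, hBD, hBK, hBD'⟩ := hc
      obtain ⟨X, hX, hXB⟩ := ih hB (lt_of_le_of_ne hKB (Ne.symm hBK)) (by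
        have := finrank_lt_of_lt (lt_of_le_of_ne hBD hBD')
        omega)
      exact ⟨X, hX, hXB.trans hBD⟩

theorem exists_chain {K : LieSubalgebra F L} (hK : IsIdealSubalg K) :
    ∃ c, ChainFrom K c := by
  obtain ⟨d, hd⟩ : ∃ d, finrank F L - finrank F K ≤ d := ⟨_, le_refl _⟩
  induction d generalizing K with
  | zero =>
    by_cases h : K = ⊤
    · exact ⟨[], h⟩
    · exfalso
      have h1 := finrank_lt_of_lt (lt_of_le_of_ne le_top h)
      rw [finrank_top_subalg] at h1
      omega
  | succ d ih =>
    by_cases h : K = ⊤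
    · exact ⟨[], h⟩
    · obtain ⟨X, hX, _⟩ := exists_chief_above hK ideal_top (lt_of_le_of_ne le_top h)
      obtain ⟨c, hc⟩ := ih hX.2.1 (by
        have h1 := finrank_lt_of_lt hX.2.2.1
        omega)
      exact ⟨X :: c, hX, hc⟩

/-- the key invariance: data multiset of a chief chain does not depend on the chain -/
theorem chain_data_eq (U : LieSubalgebra F L) :
    ∀ (d : ℕ) (K : LieSubalgebra F L) (c₁ c₂ : List (LieSubalgebra F L)),
    finrank F L - finrank F K ≤ d → ChainFrom K c₁ → ChainFrom K c₂ →
    chainData U c₁ K = chainData U c₂ K := by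
  intro d
  induction d with
  | zero =>
    intro K c₁ c₂ hd h1 h2
    have hK : K = ⊤ := by
      by_contra h
      have := finrank_lt_of_lt (lt_of_le_of_ne le_top h)
      rw [finrank_top_subalg] at this
      omega
    have hnil : ∀ c : List (LieSubalgebra F L), ChainFrom K c → c = [] := by
      intro c hc
      cases c with
      | nil => rfl
      | cons X r =>
        exfalso
        exact not_top_lt (hK ▸ hc.1.2.2.1)
    rw [hnil c₁ h1, hnil c₂ h2]
  | succ d ih =>
    intro K c₁ c₂ hd h1 h2
    cases c₁ with
    | nil =>
      cases c₂ with
      | nil => rfl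
      | cons Y r₂ =>
        exfalso
        exact not_top_lt ((h1 : K = ⊤) ▸ h2.1.2.2.1)
    | cons X r₁ =>
      cases c₂ with
      | nil =>
        exfalso
        exact not_top_lt ((h2 : K = ⊤) ▸ h1.1.2.2.1)
      | cons Y r₂ =>
        obtain ⟨hKX, hr₁⟩ := h1
        obtain ⟨hKY, hr₂⟩ := h2
        have hmX : finrank F L - finrank F X ≤ d := by
          have := finrank_lt_of_lt hKX.2.2.1
          have h2 := finrank_le_of_le (le_top : X ≤ ⊤)
          rw [finrank_top_subalg] at h2
          omega
        have hmY : finrank F L - finrank F Y ≤ d := by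
          have := finrank_lt_of_lt hKY.2.2.1
          have h2 := finrank_le_of_le (le_top : Y ≤ ⊤)
          rw [finrank_top_subalg] at h2
          omega
        by_cases hXY : X = Y
        · subst hXY
          simp only [chainData]
          rw [ih X r₁ r₂ hmX hr₁ hr₂]
        · -- build the common refinement through C = X ⊔ Y
          have hCX : ChiefStep X (X ⊔ Y) := chief_sup_left hKX hKY hXY
          have hCY : ChiefStep Y (X ⊔ Y) := by
            rw [sup_comm X Y]
            exact chief_sup_left hKY hKX (Ne.symm hXY)
          obtain ⟨t, ht⟩ := exists_chain hCX.2.1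
          have e1 : chainData U r₁ X = chainData U ((X ⊔ Y) :: t) X :=
            ih X r₁ ((X ⊔ Y) :: t) hmX hr₁ ⟨hCX, ht⟩
          have e2 : chainData U r₂ Y = chainData U ((X ⊔ Y) :: t) Y :=
            ih Y r₂ ((X ⊔ Y) :: t) hmY hr₂ ⟨hCY, ht⟩
          simp only [chainData]
          rw [e1, e2]
          simp only [chainData]
          have hpair : ∀ (a b : ℕ × Prop) (s : Multiset (ℕ × Prop)),
              a ::ₘ b ::ₘ s = ({a, b} : Multiset (ℕ × Prop)) + s := by
            intro a b s
            simp [Multiset.insert_eq_cons, Multiset.cons_add]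
          rw [hpair, hpair (fdata U K Y)]
          rw [diamond hKX hKY hXY]

end Solv

theorem exists_perm_of_map_eq : ∀ {n : ℕ} (f g : Fin n → ℕ × Prop),
    Multiset.map f Finset.univ.val = Multiset.map g Finset.univ.val →
    ∃ σ : Equiv.Perm (Fin n), ∀ i, f (σ i) = g i := by
  intro n
  induction n with
  | zero => exact fun f g _ => ⟨Equiv.refl _, fun i => i.elim0⟩
  | succ n ih =>
    intro f g h
    have hg0 : g 0 ∈ Multiset.map f Finset.univ.val := by
      rw [h]
      exact Multiset.mem_map.2 ⟨0, Finset.mem_univ (0 : Fin (n+1)), rfl⟩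
    obtain ⟨i₀, _, hfi₀⟩ := Multiset.mem_map.1 hg0
    have huniv1 : (Finset.univ : Finset (Fin (n+1))).val
        = i₀ ::ₘ (Finset.univ : Finset (Fin n)).val.map (Fin.succAbove i₀) := by
      rw [Fin.univ_succAbove n i₀]
      rfl
    have huniv2 : (Finset.univ : Finset (Fin (n+1))).val
        = (0 : Fin (n+1)) ::ₘ (Finset.univ : Finset (Fin n)).val.map Fin.succ := by
      rw [Fin.univ_succ n]
      rfl
    rw [show Multiset.map f Finset.univ.val
        = Multiset.map f (i₀ ::ₘ (Finset.univ : Finset (Fin n)).val.map (Fin.succAbove i₀))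
        from by rw [← huniv1],
      show Multiset.map g Finset.univ.val
        = Multiset.map g ((0 : Fin (n+1)) ::ₘ (Finset.univ : Finset (Fin n)).val.map Fin.succ)
        from by rw [← huniv2]] at h
    rw [Multiset.map_cons, Multiset.map_cons, Multiset.map_map, Multiset.map_map, hfi₀] at h
    rw [Multiset.cons_inj_right] at h
    obtain ⟨σ', hσ'⟩ := ih (f ∘ Fin.succAbove i₀) (g ∘ Fin.succ) h
    refine ⟨(finSuccEquiv n).trans ((Equiv.optionCongr σ').trans (finSuccEquiv' i₀).symm), ?_⟩
    intro i
    induction i using Fin.cases with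
    | zero =>
      simp only [Equiv.trans_apply, finSuccEquiv_zero, Equiv.optionCongr_apply,
        Option.map_none, finSuccEquiv'_symm_none]
      exact hfi₀
    | succ j =>
      simp only [Equiv.trans_apply, finSuccEquiv_succ, Equiv.optionCongr_apply,
        Option.map_some, finSuccEquiv'_symm_some]
      exact hσ' j

section Final
variable [IsSolvable L] [FiniteDimensional F L]

theorem series_step {A : ℕ → LieSubalgebra F L} {n : ℕ} (hA : IsChiefSeries A n)
    {i : ℕ} (hi : i < n) : ChiefStep (A i) (A (i + 1)) :=
  ⟨hA.2.2.1 i, hA.2.2.1 (i + 1), (hA.2.2.2 i hi).1, (hA.2.2.2 i hi).2⟩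

theorem series_chain {A : ℕ → LieSubalgebra F L} {n : ℕ} (hA : IsChiefSeries A n) :
    ∀ k i, i + k = n →
      ChainFrom (A i) ((List.range k).map (fun j => A (i + 1 + j))) := by
  intro k
  induction k with
  | zero =>
    intro i hi
    show A i = ⊤
    rw [Nat.add_zero] at hi
    rw [hi]
    exact hA.2.1
  | succ k ih =>
    intro i hi
    rw [List.range_succ_eq_map, List.map_cons, List.map_map]
    have hfun : (fun j => A (i + 1 + j)) ∘ Nat.succ = fun j => A ((i + 1) + 1 + j) := by
      funext j
      show A (i + 1 + (j + 1)) = A (i + 1 + 1 + j)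
      congr 1
      omega
    refine ⟨?_, ?_⟩
    · have := series_step hA (show i < n by omega)
      simpa using this
    · rw [hfun]
      exact ih (i + 1) (by omega)

theorem series_data {A : ℕ → LieSubalgebra F L} (U : LieSubalgebra F L) :
    ∀ k i, chainData U ((List.range k).map (fun j => A (i + 1 + j))) (A i)
      = (((List.range k).map (fun j => fdata U (A (i + j)) (A (i + j + 1)))) : Multiset (ℕ × Prop)) := by
  intro k
  induction k with
  | zero => intro i; rfl
  | succ k ih =>
    intro i
    rw [List.range_succ_eq_map, List.map_cons, List.map_map, List.map_cons, List.map_map]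
    have hfun : (fun j => A (i + 1 + j)) ∘ Nat.succ = fun j => A ((i + 1) + 1 + j) := by
      funext j
      show A (i + 1 + (j + 1)) = A (i + 1 + 1 + j)
      congr 1
      omega
    have hfun2 : (fun j => fdata U (A (i + j)) (A (i + j + 1))) ∘ Nat.succ
        = fun j => fdata U (A ((i+1) + j)) (A ((i+1) + j + 1)) := by
      funext j
      show fdata U (A (i + (j+1))) (A (i + (j+1) + 1)) = fdata U (A (i + 1 + j)) (A (i + 1 + j + 1))
      have e1 : i + (j+1) = i + 1 + j := by omega
      have e2 : i + (j+1) + 1 = i + 1 + j + 1 := by omega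
      rw [e1]
    rw [hfun, hfun2]
    show fdata U (A i) (A (i + 1 + 0)) ::ₘ chainData U _ (A (i + 1 + 0)) = _
    rw [← Multiset.cons_coe]
    simp only [Nat.add_zero]
    rw [ih (i+1)]

theorem main_theorem (U : LieSubalgebra F L) (n : ℕ) (A B : ℕ → LieSubalgebra F L)
    (hA : IsChiefSeries A n) (hB : IsChiefSeries B n) :
    ∃ θ : Equiv.Perm (Fin n), ∀ i : Fin n,
      (finrank F (A ((i : ℕ) + 1)) - finrank F (A (i : ℕ))
        = finrank F (B ((θ i : ℕ) + 1)) - finrank F (B (θ i : ℕ))) ∧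
      (UF U (A (i : ℕ)) (A ((i : ℕ) + 1)) ↔ UF U (B (θ i : ℕ)) (B ((θ i : ℕ) + 1))) := by
  classical
  have hcA : ChainFrom (A 0) ((List.range n).map (fun j => A (0 + 1 + j))) :=
    series_chain hA n 0 (by omega)
  have hcB : ChainFrom (B 0) ((List.range n).map (fun j => B (0 + 1 + j))) :=
    series_chain hB n 0 (by omega)
  have hKeq : A 0 = B 0 := by rw [hA.1, hB.1]
  have hcB' : ChainFrom (A 0) ((List.range n).map (fun j => B (0 + 1 + j))) := by
    rw [hKeq]; exact hcB
  have hmain := chain_data_eq U (finrank F L) (A 0)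
    ((List.range n).map (fun j => A (0 + 1 + j)))
    ((List.range n).map (fun j => B (0 + 1 + j)))
    (by omega) hcA hcB'
  have hdA := series_data (A := A) U n 0
  have hdB := series_data (A := B) U n 0
  have hdB' : chainData U ((List.range n).map (fun j => B (0 + 1 + j))) (A 0)
      = (((List.range n).map (fun j => fdata U (B (0 + j)) (B (0 + j + 1)))) : Multiset (ℕ × Prop)) := by
    rw [hKeq]; exact hdB
  rw [hdA, hdB'] at hmain
  -- convert to Fin-indexed maps
  set gA : Fin n → ℕ × Prop := fun i => fdata U (A (i : ℕ)) (A ((i : ℕ) + 1)) with hgA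
  set gB : Fin n → ℕ × Prop := fun i => fdata U (B (i : ℕ)) (B ((i : ℕ) + 1)) with hgB
  have hconvA : ((List.range n).map (fun j => fdata U (A (0 + j)) (A (0 + j + 1)))
      : Multiset (ℕ × Prop)) = Multiset.map gA Finset.univ.val := by
    rw [Fin.univ_val_map]
    congr 1
    rw [List.ofFn_eq_map, ← List.map_coe_finRange_eq_range, List.map_map]
    congr 1
    funext i
    show fdata U (A (0 + (i : ℕ))) (A (0 + (i : ℕ) + 1)) = fdata U (A (i : ℕ)) (A ((i : ℕ) + 1))
    rw [Nat.zero_add]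
  have hconvB : ((List.range n).map (fun j => fdata U (B (0 + j)) (B (0 + j + 1)))
      : Multiset (ℕ × Prop)) = Multiset.map gB Finset.univ.val := by
    rw [Fin.univ_val_map]
    congr 1
    rw [List.ofFn_eq_map, ← List.map_coe_finRange_eq_range, List.map_map]
    congr 1
    funext i
    show fdata U (B (0 + (i : ℕ))) (B (0 + (i : ℕ) + 1)) = fdata U (B (i : ℕ)) (B ((i : ℕ) + 1))
    rw [Nat.zero_add]
  rw [hconvA, hconvB] at hmain
  obtain ⟨σ, hσ⟩ := exists_perm_of_map_eq gB gA hmain.symm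
  refine ⟨σ, fun i => ?_⟩
  have e := (hσ i).symm
  rw [hgA, hgB] at e
  simp only at e
  unfold fdata at e
  rw [Prod.ext_iff] at e
  exact ⟨e.1, iff_of_eq e.2⟩

end Final

end Paper

theorem stmt9 {F : Type*} [Field F] {L : Type*} [LieRing L] [LieAlgebra F L]
    [LieAlgebra.IsSolvable L] [FiniteDimensional F L]
    (U : LieSubalgebra F L) (n : ℕ) (A B : ℕ → LieSubalgebra F L)
    (hA : Paper.IsChiefSeries A n) (hB : Paper.IsChiefSeries B n) :
    ∃ θ : Equiv.Perm (Fin n), ∀ i : Fin n,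
      Paper.factorDim F (A i) (A (i + 1))
        = Paper.factorDim F (B (θ i)) (B ((θ i : ℕ) + 1)) ∧
      (Paper.IsUFrattiniFactor U (A i) (A (i + 1)) ↔
        Paper.IsUFrattiniFactor U (B (θ i)) (B ((θ i : ℕ) + 1))) := by
  obtain ⟨θ, hθ⟩ := Paper.main_theorem U n A B hA hB
  exact ⟨θ, fun i => ⟨(hθ i).1, (hθ i).2⟩⟩
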